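/- Let 1 → N → G → H → 1 be a short exact sequence of groups. If N is finite and H is virtually solvable, then G is virtually solvable and its virtual derived length satisfies ℓ_vir(G) ≤ ℓ_vir(H) + 1. -/

import Mathlib

/-- Let `1 → N → G → H → 1` be a short exact sequence of groups.  If `N` is finite and
`H` is virtually solvable (with a finite-index subgroup of derived length at most `m`),
then `G` is virtually solvable with `ℓ_vir(G) ≤ ℓ_vir(H) + 1`. -/
theorem virtually_solvable_extension_of_finite_kernel {N G H : Type*}
    [Group N] [Group G] [Group H] [Finite N]
    (f : N →* G) (g : G →* H) (hf : Function.Injective f) (hg : Function.Surjective g)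
    (hexact : g.ker = f.range)
    (m : ℕ) (hH : ∃ K : Subgroup H, K.FiniteIndex ∧ derivedSeries K m = ⊥) :
    ∃ K : Subgroup G, K.FiniteIndex ∧ derivedSeries K (m + 1) = ⊥ := by
  obtain ⟨K, hKfi, hKsol⟩ := hH
  -- pull K back to G
  set K' : Subgroup G := K.comap g with hK'
  have hK'fi : K'.FiniteIndex := by
    constructor
    rw [hK', Subgroup.index_comap_of_surjective K hg]
    exact hKfi.index_ne_zero
  -- the restriction of g to K' lands in K
  let r : ↥K' →* ↥K := (g.domRestrict K').codRestrict K (fun x => x.2)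
  -- `g.ker = f.range` is finite
  have hker_fin : Finite ↥g.ker := by
    rw [hexact]
    exact Finite.of_equiv N (MonoidHom.ofInjective hf).toEquiv
  -- the derived series of K' at stage m lies in the kernel of r
  set D : Subgroup ↥K' := derivedSeries ↥K' m with hD
  have hDker : D ≤ r.ker := by
    intro x hx
    have h1 : r x ∈ derivedSeries ↥K m := map_derivedSeries_le_derivedSeries r m ⟨x, hx, rfl⟩
    rw [hKsol, Subgroup.mem_bot] at h1
    exact h1
  -- hence D is finite
  have hDfin : Finite ↥D := by
    have key : ∀ x : ↥D, ((x : ↥K') : G) ∈ g.ker := by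
      intro x
      have hx : r (x : ↥K') = 1 := hDker x.2
      have := congrArg Subtype.val hx
      rw [MonoidHom.mem_ker]; exact this
    have hinj : Function.Injective (fun x : ↥D => (⟨((x : ↥K') : G), key x⟩ : ↥g.ker)) := by
      intro a b hab
      have h2 := congrArg Subtype.val hab
      exact Subtype.ext (Subtype.ext h2)
    exact Finite.of_injective _ hinj
  have hDnorm : D.Normal := derivedSeries_normal _ _
  -- the centralizer of D in K' is the kernel of the conjugation action
  let φ : ↥K' →* MulAut ↥D := MulAut.conjNormal
  have hAutFin : Finite (MulAut ↥D) :=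
    Finite.of_injective (fun e : MulAut ↥D => (e : ↥D ≃ ↥D))
      (fun a b h => MulEquiv.toEquiv_injective h)
  have hCfi : φ.ker.FiniteIndex := Subgroup.finiteIndex_ker φ
  -- the witness subgroup
  refine ⟨(φ.ker).map K'.subtype, ?_, ?_⟩
  · constructor
    rw [Subgroup.index_map]
    simp only [Subgroup.ker_subtype, sup_bot_eq, Subgroup.range_subtype]
    exact Nat.mul_ne_zero hCfi.index_ne_zero hK'fi.index_ne_zero
  · -- derived length ≤ m + 1
    set L : Subgroup G := (φ.ker).map K'.subtype with hL
    have hLle : L ≤ K' := Subgroup.map_subtype_le _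
    let ι : ↥L →* ↥K' := Subgroup.inclusion hLle
    have hιinj : Function.Injective ι := Subgroup.inclusion_injective hLle
    -- images of the m-th derived series of L lie in D
    have hmap : Subgroup.map ι (derivedSeries ↥L m) ≤ D :=
      map_derivedSeries_le_derivedSeries ι m
    -- every element of L is, as an element of K', in ker φ
    have hC : ∀ x : ↥L, ι x ∈ φ.ker := by
      intro x
      obtain ⟨c, hc, hcx⟩ := x.2
      have : ι x = c := by
        apply Subtype.ext
        simpa [ι, Subgroup.inclusion] using hcx.symm
      rwa [this]
    -- so any two elements of derivedSeries L m commute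
    rw [derivedSeries_succ, Subgroup.commutator_eq_bot_iff_le_centralizer]
    intro x hx z hz
    -- it suffices to check commutation after the injection ι
    have hcomm : ι z * ι x = ι x * ι z := by
      have hxD : ι x ∈ D := hmap ⟨x, hx, rfl⟩
      have hzC : ι z ∈ φ.ker := hC z
      have h3 := MulAut.conjNormal_apply (H := D) (ι z) ⟨ι x, hxD⟩
      rw [MonoidHom.mem_ker] at hzC
      have hzC' : MulAut.conjNormal (ι z) = (1 : MulAut ↥D) := hzC
      rw [hzC'] at h3
      simp only [MulAut.one_apply] at h3
      have h4 : ι z * ι x * (ι z)⁻¹ = ι x := by exact_mod_cast h3.symm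
      calc ι z * ι x = (ι z * ι x * (ι z)⁻¹) * ι z := by group
        _ = ι x * ι z := by rw [h4]
    have h5 : ι (z * x) = ι (x * z) := by simp only [map_mul]; exact hcomm
    exact hιinj h5
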